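/- Run SGD with learning rate δ = 1/(L√K) and batch size 1 for K iterations on an L-smooth function f bounded below by f*, with unbiased stochastic gradient variance at most σ². Then E[(1/K)Σ_{k<K} ‖g_k‖₂²] ≤ (1/√K)[2L(f₀ − f*) + σ²]. -/

import Mathlib

open MeasureTheory ProbabilityTheory


lemma sgd_aux_cont {d : ℕ} (f : (Fin d → ℝ) → ℝ) (g : (Fin d → ℝ) → (Fin d → ℝ)) (L : ℝ)
    (hsmooth : ∀ x y : Fin d → ℝ,
      |f y - (f x + ∑ i, g x i * (y i - x i))| ≤ (L / 2) * ∑ i, (y i - x i) ^ 2) :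
    Continuous f := by
  rw [continuous_iff_continuousAt]
  intro x
  have hlo : ∀ y, f x + (∑ i, g x i * (y i - x i)) - (L/2) * ∑ i, (y i - x i)^2 ≤ f y := by
    intro y
    have := (abs_le.1 (hsmooth x y)).1
    linarith
  have hhi : ∀ y, f y ≤ f x + (∑ i, g x i * (y i - x i)) + (L/2) * ∑ i, (y i - x i)^2 := by
    intro y
    have := (abs_le.1 (hsmooth x y)).2
    linarith
  have hc1 : Continuous fun y : Fin d → ℝ =>
      f x + (∑ i, g x i * (y i - x i)) - (L/2) * ∑ i, (y i - x i)^2 := by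
    refine (continuous_const.add ?_).sub (continuous_const.mul ?_)
    · exact continuous_finset_sum _ fun i _ =>
        continuous_const.mul ((continuous_apply i).sub continuous_const)
    · exact continuous_finset_sum _ fun i _ =>
        ((continuous_apply i).sub continuous_const).pow 2
  have hc2 : Continuous fun y : Fin d → ℝ =>
      f x + (∑ i, g x i * (y i - x i)) + (L/2) * ∑ i, (y i - x i)^2 := by
    refine (continuous_const.add ?_).add (continuous_const.mul ?_)
    · exact continuous_finset_sum _ fun i _ =>
        continuous_const.mul ((continuous_apply i).sub continuous_const)
    · exact continuous_finset_sum _ fun i _ =>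
        ((continuous_apply i).sub continuous_const).pow 2
  have h1 := hc1.continuousAt (x := x)
  have h2 := hc2.continuousAt (x := x)
  simp only [ContinuousAt, sub_self] at h1 h2 ⊢
  norm_num at h1 h2
  exact tendsto_of_tendsto_of_tendsto_of_le_of_le h1 h2 hlo hhi

lemma sgd_aux_gradbd {d : ℕ} (f : (Fin d → ℝ) → ℝ) (g : (Fin d → ℝ) → (Fin d → ℝ))
    (L fstar : ℝ) (hL : 0 < L) (hlower : ∀ x, fstar ≤ f x)
    (hsmooth : ∀ x y : Fin d → ℝ,
      |f y - (f x + ∑ i, g x i * (y i - x i))| ≤ (L / 2) * ∑ i, (y i - x i) ^ 2)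
    (x : Fin d → ℝ) : ∑ i, (g x i)^2 ≤ 2*L*(f x - fstar) := by
  set y : Fin d → ℝ := fun i => x i - (1/L) * g x i with hy
  have h1 : ∑ i, g x i * (y i - x i) = -(1/L) * ∑ i, (g x i)^2 := by
    rw [Finset.mul_sum]
    refine Finset.sum_congr rfl fun i _ => ?_
    simp only [hy]; ring
  have h2 : ∑ i, (y i - x i)^2 = (1/L)^2 * ∑ i, (g x i)^2 := by
    rw [Finset.mul_sum]
    refine Finset.sum_congr rfl fun i _ => ?_
    simp only [hy]; ring
  have h3 := (abs_le.1 (hsmooth x y)).2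
  rw [h1, h2] at h3
  have h4 := hlower y
  have hL' : L ≠ 0 := ne_of_gt hL
  have h5 : (L/2) * ((1/L)^2 * ∑ i, (g x i)^2) = (1/(2*L)) * ∑ i, (g x i)^2 := by
    field_simp
  rw [h5] at h3
  have e1 : L * (-(1/L) * ∑ i, (g x i)^2) = -∑ i, (g x i)^2 := by field_simp
  have e2 : L * (1/(2*L) * ∑ i, (g x i)^2) = (∑ i, (g x i)^2)/2 := by field_simp
  have h3s := mul_le_mul_of_nonneg_left h3 hL.le
  have h4s := mul_le_mul_of_nonneg_left h4 hL.le
  nlinarith [h3s, h4s, e1, e2]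


set_option maxHeartbeats 2000000 in
theorem smallBatchSGD_nonconvex_convergence
    {Ω : Type*} [MeasureSpace Ω] [IsProbabilityMeasure (ℙ : Measure Ω)]
    {d K : ℕ} (hK : 0 < K)
    (f : (Fin d → ℝ) → ℝ) (g : (Fin d → ℝ) → (Fin d → ℝ))
    (L σ fstar : ℝ) (hL : 0 < L) (hσ : 0 ≤ σ)
    (hlower : ∀ x, fstar ≤ f x)
    (hsmooth : ∀ x y : Fin d → ℝ,
      |f y - (f x + ∑ i, g x i * (y i - x i))| ≤ (L / 2) * ∑ i, (y i - x i) ^ 2)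
    (X : ℕ → Ω → (Fin d → ℝ)) (gt : ℕ → Ω → (Fin d → ℝ))
    (x0 : Fin d → ℝ) (hX0 : ∀ ω, X 0 ω = x0)
    (hXmeas : ∀ k, Measurable (X k)) (hgtmeas : ∀ k, Measurable (gt k))
    -- SGD update with learning rate δ = 1/(L√K)
    (hupdate : ∀ k ω i, X (k + 1) ω i = X k ω i - (1 / (L * Real.sqrt K)) * gt k ω i)
    -- the (batch size 1) gradient oracle is conditionally unbiased
    -- with total variance bounded by σ²
    (hint : ∀ k i, Integrable (fun ω => gt k ω i) ℙ)
    (hint2 : ∀ k, Integrable (fun ω => ∑ i, (gt k ω i - g (X k ω) i) ^ 2) ℙ)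
    (hunbiased : ∀ k i,
      MeasureTheory.condExp (MeasurableSpace.comap (X k) inferInstance) ℙ
        (fun ω => gt k ω i) =ᵐ[ℙ] fun ω => g (X k ω) i)
    (hvar : ∀ k, ∀ᵐ ω ∂ℙ,
      MeasureTheory.condExp (MeasurableSpace.comap (X k) inferInstance) ℙ
        (fun ω' => ∑ i, (gt k ω' i - g (X k ω') i) ^ 2) ω ≤ σ ^ 2) :
    ∫ ω, (1 / K : ℝ) * ∑ k ∈ Finset.range K, ∑ i, (g (X k ω) i) ^ 2 ∂ℙ ≤
      (1 / Real.sqrt K : ℝ) * (2 * L * (f x0 - fstar) + σ ^ 2) := by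
  classical
  have hK0 : (0:ℝ) < (K:ℝ) := by exact_mod_cast hK
  set q : ℝ := Real.sqrt K with hqdef
  have hq0 : 0 < q := Real.sqrt_pos.2 hK0
  have hqq : q * q = (K:ℝ) := Real.mul_self_sqrt hK0.le
  have hK1 : (1:ℝ) ≤ (K:ℝ) := by exact_mod_cast hK
  have hq1 : 1 ≤ q := by nlinarith [hqq, hq0, hK1]
  set D : ℝ := 1 / (L * q) with hD
  have hD0 : 0 < D := by positivity
  have hcont : Continuous f := sgd_aux_cont f g L hsmooth
  have hgradbd := sgd_aux_gradbd f g L fstar hL hlower hsmooth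
  have hm : ∀ k, MeasurableSpace.comap (X k) inferInstance ≤ (inferInstance : MeasurableSpace Ω) :=
    fun k => (hXmeas k).comap_le
  haveI hsf : ∀ k, SigmaFinite ((ℙ : Measure Ω).trim (hm k)) := fun k => by
    infer_instance
  set φ : ℕ → Fin d → Ω → ℝ := fun k i =>
    MeasureTheory.condExp (MeasurableSpace.comap (X k) inferInstance) ℙ (fun ω => gt k ω i)
    with hφdef
  have hφae : ∀ k i, φ k i =ᵐ[ℙ] fun ω => g (X k ω) i := hunbiased
  have hφm : ∀ k i, Measurable (φ k i) := fun k i =>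
    (stronglyMeasurable_condExp.mono (hm k)).measurable
  have hgae : ∀ k, ∀ᵐ ω ∂ℙ, ∀ i, g (X k ω) i = φ k i ω := by
    intro k
    rw [MeasureTheory.ae_all_iff]
    intro i; filter_upwards [hφae k i] with ω h; exact h.symm
  have hgtm : ∀ k i, Measurable fun ω => gt k ω i := fun k i =>
    (measurable_pi_apply i).comp (hgtmeas k)
  have hfXm : ∀ k, AEStronglyMeasurable (fun ω => f (X k ω)) ℙ := fun k =>
    (hcont.measurable.comp (hXmeas k)).aestronglyMeasurable
  have hGgnn : ∀ k ω, 0 ≤ ∑ i, (g (X k ω) i)^2 := fun k ω =>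
    Finset.sum_nonneg fun i _ => sq_nonneg _
  have hGgm : ∀ k, AEStronglyMeasurable (fun ω => ∑ i, (g (X k ω) i)^2) ℙ := by
    intro k
    refine ((Finset.measurable_sum Finset.univ fun i _ =>
      ((hφm k i).pow_const 2)).aestronglyMeasurable).congr ?_
    filter_upwards [hgae k] with ω h
    exact Finset.sum_congr rfl fun i _ => by rw [h i]
  -- integrability of ∑ᵢ g(Xₖ)ᵢ²
  have hGgint : ∀ k, Integrable (fun ω => f (X k ω)) ℙ →
      Integrable (fun ω => ∑ i, (g (X k ω) i)^2) ℙ := by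
    intro k hf
    refine Integrable.mono' ((hf.sub (integrable_const fstar)).const_mul (2*L)) (hGgm k) ?_
    filter_upwards with ω
    rw [Real.norm_eq_abs, abs_of_nonneg (hGgnn k ω)]
    exact hgradbd (X k ω)
  have hgi2int : ∀ k, Integrable (fun ω => ∑ i, (g (X k ω) i)^2) ℙ →
      ∀ i, Integrable (fun ω => (g (X k ω) i)^2) ℙ := by
    intro k hGg i
    refine Integrable.mono' hGg (((hφm k i).pow_const 2).aestronglyMeasurable.congr ?_) ?_
    · filter_upwards [hφae k i] with ω h; rw [h]
    · filter_upwards with ω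
      rw [Real.norm_eq_abs, abs_of_nonneg (sq_nonneg _)]
      exact Finset.single_le_sum (f := fun j => (g (X k ω) j)^2)
        (fun j _ => sq_nonneg _) (Finset.mem_univ i)
  have hdi2int : ∀ k i, Integrable (fun ω => (gt k ω i - g (X k ω) i)^2) ℙ := by
    intro k i
    refine Integrable.mono' (hint2 k)
      ((((hgtm k i).sub (hφm k i)).pow_const 2).aestronglyMeasurable.congr ?_) ?_
    · filter_upwards [hφae k i] with ω h; show (gt k ω i - φ k i ω)^2 = _; rw [h]
    · filter_upwards with ω
      rw [Real.norm_eq_abs, abs_of_nonneg (sq_nonneg _)]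
      exact Finset.single_le_sum (f := fun j => (gt k ω j - g (X k ω) j)^2)
        (fun j _ => sq_nonneg _) (Finset.mem_univ i)
  have hgt2int : ∀ k, Integrable (fun ω => ∑ i, (g (X k ω) i)^2) ℙ →
      ∀ i, Integrable (fun ω => (gt k ω i)^2) ℙ := by
    intro k hGg i
    refine Integrable.mono'
      (((hgi2int k hGg i).const_mul 2).add ((hdi2int k i).const_mul 2))
      (((hgtm k i).pow_const 2).aestronglyMeasurable) ?_
    filter_upwards with ω
    simp only [Pi.add_apply]
    rw [Real.norm_eq_abs, abs_of_nonneg (sq_nonneg _)]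
    nlinarith [sq_nonneg (gt k ω i - 2 * g (X k ω) i)]
  have hgigtint : ∀ k, Integrable (fun ω => ∑ i, (g (X k ω) i)^2) ℙ →
      ∀ i, Integrable (fun ω => g (X k ω) i * gt k ω i) ℙ := by
    intro k hGg i
    refine Integrable.mono'
      (((hgi2int k hGg i).add (hgt2int k hGg i)).const_mul (1/2))
      (((hφm k i).mul (hgtm k i)).aestronglyMeasurable.congr ?_) ?_
    · filter_upwards [hφae k i] with ω h; show φ k i ω * gt k ω i = _; rw [h]
    · filter_upwards with ω
      simp only [Pi.add_apply]
      rw [Real.norm_eq_abs]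
      rw [abs_le]
      constructor
      · nlinarith [sq_nonneg (g (X k ω) i + gt k ω i)]
      · nlinarith [sq_nonneg (g (X k ω) i - gt k ω i)]
  -- pointwise descent
  have hdescent : ∀ k ω, f (X (k+1) ω) ≤ f (X k ω)
      - D * (∑ i, g (X k ω) i * gt k ω i) + (L * D^2 / 2) * (∑ i, (gt k ω i)^2) := by
    intro k ω
    have h3 := (abs_le.1 (hsmooth (X k ω) (X (k+1) ω))).2
    have e1 : ∑ i, g (X k ω) i * (X (k+1) ω i - X k ω i)
        = -D * ∑ i, g (X k ω) i * gt k ω i := by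
      rw [Finset.mul_sum]
      refine Finset.sum_congr rfl fun i _ => ?_
      rw [hupdate k ω i]; ring
    have e2 : ∑ i, (X (k+1) ω i - X k ω i)^2 = D^2 * ∑ i, (gt k ω i)^2 := by
      rw [Finset.mul_sum]
      refine Finset.sum_congr rfl fun i _ => ?_
      rw [hupdate k ω i]; ring
    rw [e1, e2] at h3
    nlinarith [h3]
  -- integrability of f(Xₖ)
  have hfint : ∀ k, Integrable (fun ω => f (X k ω)) ℙ := by
    intro k
    induction k with
    | zero => simp only [hX0]; exact integrable_const _
    | succ k ih =>
      have hGg := hGgint k ih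
      have hS : Integrable (fun ω => ∑ i, g (X k ω) i * gt k ω i) ℙ :=
        integrable_finset_sum _ fun i _ => hgigtint k hGg i
      have hT : Integrable (fun ω => ∑ i, (gt k ω i)^2) ℙ :=
        integrable_finset_sum _ fun i _ => hgt2int k hGg i
      have hU : Integrable (fun ω => f (X k ω)
          - D * (∑ i, g (X k ω) i * gt k ω i) + (L * D^2 / 2) * (∑ i, (gt k ω i)^2)) ℙ :=
        (ih.sub (hS.const_mul D)).add (hT.const_mul _)
      refine Integrable.mono' ((integrable_const |fstar|).add hU.abs) (hfXm (k+1)) ?_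
      filter_upwards with ω
      simp only [Pi.add_apply]
      rw [Real.norm_eq_abs, abs_le]
      constructor
      · have h1 := hlower (X (k+1) ω)
        have h2 := neg_abs_le fstar
        have h3 := abs_nonneg (f (X k ω)
          - D * (∑ i, g (X k ω) i * gt k ω i) + (L * D^2 / 2) * (∑ i, (gt k ω i)^2))
        linarith
      · have h1 := hdescent k ω
        have h2 := le_abs_self (f (X k ω)
          - D * (∑ i, g (X k ω) i * gt k ω i) + (L * D^2 / 2) * (∑ i, (gt k ω i)^2))
        have h3 := abs_nonneg fstar
        linarith
  -- key conditional-expectation identity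
  have hSi : ∀ k, Integrable (fun ω => ∑ i, (g (X k ω) i)^2) ℙ → ∀ i,
      ∫ ω, g (X k ω) i * gt k ω i ∂ℙ = ∫ ω, (g (X k ω) i)^2 ∂ℙ := by
    intro k hGg i
    have hprod : Integrable (φ k i * fun ω => gt k ω i) ℙ := by
      refine (hgigtint k hGg i).congr ?_
      filter_upwards [hφae k i] with ω h
      show g (X k ω) i * gt k ω i = φ k i ω * gt k ω i
      rw [h]
    have hpull := condExp_mul_of_stronglyMeasurable_left
      (m := MeasurableSpace.comap (X k) inferInstance) (μ := (ℙ : Measure Ω))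
      (stronglyMeasurable_condExp (f := fun ω => gt k ω i)) hprod (hint k i)
    calc ∫ ω, g (X k ω) i * gt k ω i ∂ℙ
        = ∫ ω, (φ k i * fun ω' => gt k ω' i) ω ∂ℙ := by
          refine integral_congr_ae ?_
          filter_upwards [hφae k i] with ω h
          show g (X k ω) i * gt k ω i = φ k i ω * gt k ω i
          rw [h]
      _ = ∫ ω, ((ℙ : Measure Ω)[(φ k i * fun ω' => gt k ω' i)
            | MeasurableSpace.comap (X k) inferInstance]) ω ∂ℙ :=
          (integral_condExp (hm k)).symm
      _ = ∫ ω, (φ k i ω) * (φ k i ω) ∂ℙ := by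
          refine integral_congr_ae ?_
          filter_upwards [hpull] with ω h
          exact h
      _ = ∫ ω, (g (X k ω) i)^2 ∂ℙ := by
          refine integral_congr_ae ?_
          filter_upwards [hφae k i] with ω h
          rw [h]; ring
  -- second moment decomposition
  have hTeq : ∀ k, Integrable (fun ω => ∑ i, (g (X k ω) i)^2) ℙ →
      (∫ ω, ∑ i, (gt k ω i)^2 ∂ℙ) = (∫ ω, ∑ i, (g (X k ω) i)^2 ∂ℙ)
        + ∫ ω, ∑ i, (gt k ω i - g (X k ω) i)^2 ∂ℙ := by
    intro k hGg
    rw [integral_finset_sum _ (fun i _ => hgt2int k hGg i),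
      integral_finset_sum _ (fun i _ => hgi2int k hGg i),
      integral_finset_sum _ (fun i _ => hdi2int k i), ← Finset.sum_add_distrib]
    refine Finset.sum_congr rfl fun i _ => ?_
    calc ∫ ω, (gt k ω i)^2 ∂ℙ
        = ∫ ω, (2 * (g (X k ω) i * gt k ω i) - (g (X k ω) i)^2
            + (gt k ω i - g (X k ω) i)^2) ∂ℙ := by
          refine integral_congr_ae (Filter.Eventually.of_forall fun ω => ?_)
          ring
      _ = 2 * (∫ ω, g (X k ω) i * gt k ω i ∂ℙ) - (∫ ω, (g (X k ω) i)^2 ∂ℙ)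
            + ∫ ω, (gt k ω i - g (X k ω) i)^2 ∂ℙ := by
          have hA : Integrable (fun ω => 2 * (g (X k ω) i * gt k ω i)
              - (g (X k ω) i)^2) ℙ :=
            ((hgigtint k hGg i).const_mul 2).sub (hgi2int k hGg i)
          rw [integral_add hA (hdi2int k i),
            integral_sub ((hgigtint k hGg i).const_mul 2) (hgi2int k hGg i),
            integral_const_mul _ _]
      _ = (∫ ω, (g (X k ω) i)^2 ∂ℙ) + ∫ ω, (gt k ω i - g (X k ω) i)^2 ∂ℙ := by
          rw [hSi k hGg i]; ring
  -- variance bound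
  have hVbd : ∀ k, ∫ ω, ∑ i, (gt k ω i - g (X k ω) i)^2 ∂ℙ ≤ σ^2 := by
    intro k
    have h1 : ∫ ω, ∑ i, (gt k ω i - g (X k ω) i)^2 ∂ℙ
        = ∫ ω, ((ℙ : Measure Ω)[(fun ω' => ∑ i, (gt k ω' i - g (X k ω') i)^2)
            | MeasurableSpace.comap (X k) inferInstance]) ω ∂ℙ :=
      (integral_condExp (hm k)).symm
    rw [h1]
    calc ∫ ω, ((ℙ : Measure Ω)[(fun ω' => ∑ i, (gt k ω' i - g (X k ω') i)^2)
            | MeasurableSpace.comap (X k) inferInstance]) ω ∂ℙ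
        ≤ ∫ _ω, σ^2 ∂ℙ := integral_mono_ae integrable_condExp (integrable_const _) (hvar k)
      _ = σ^2 := by simp
  -- one-step expected descent
  have hstep : ∀ k, ∫ ω, f (X (k+1) ω) ∂ℙ ≤ ∫ ω, f (X k ω) ∂ℙ
      - (D - L * D^2 / 2) * (∫ ω, ∑ i, (g (X k ω) i)^2 ∂ℙ) + (L * D^2 / 2) * σ^2 := by
    intro k
    have hf := hfint k
    have hGg := hGgint k hf
    have hS : Integrable (fun ω => ∑ i, g (X k ω) i * gt k ω i) ℙ :=
      integrable_finset_sum _ fun i _ => hgigtint k hGg i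
    have hT : Integrable (fun ω => ∑ i, (gt k ω i)^2) ℙ :=
      integrable_finset_sum _ fun i _ => hgt2int k hGg i
    have hU : Integrable (fun ω => f (X k ω)
        - D * (∑ i, g (X k ω) i * gt k ω i) + (L * D^2 / 2) * (∑ i, (gt k ω i)^2)) ℙ :=
      (hf.sub (hS.const_mul D)).add (hT.const_mul _)
    have h1 : ∫ ω, f (X (k+1) ω) ∂ℙ ≤ ∫ ω, (f (X k ω)
        - D * (∑ i, g (X k ω) i * gt k ω i) + (L * D^2 / 2) * (∑ i, (gt k ω i)^2)) ∂ℙ :=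
      integral_mono (hfint (k+1)) hU (fun ω => hdescent k ω)
    have h2 : ∫ ω, (f (X k ω)
        - D * (∑ i, g (X k ω) i * gt k ω i) + (L * D^2 / 2) * (∑ i, (gt k ω i)^2)) ∂ℙ
        = ∫ ω, f (X k ω) ∂ℙ - D * (∫ ω, ∑ i, g (X k ω) i * gt k ω i ∂ℙ)
          + (L * D^2 / 2) * (∫ ω, ∑ i, (gt k ω i)^2 ∂ℙ) := by
      have hFS : Integrable (fun ω => f (X k ω)
          - D * ∑ i, g (X k ω) i * gt k ω i) ℙ := hf.sub (hS.const_mul D)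
      rw [integral_add hFS (hT.const_mul (L * D^2 / 2)),
        integral_sub hf (hS.const_mul D), integral_const_mul _ _, integral_const_mul _ _]
    have h3 : ∫ ω, ∑ i, g (X k ω) i * gt k ω i ∂ℙ = ∫ ω, ∑ i, (g (X k ω) i)^2 ∂ℙ := by
      rw [integral_finset_sum _ (fun i _ => hgigtint k hGg i),
        integral_finset_sum _ (fun i _ => hgi2int k hGg i)]
      exact Finset.sum_congr rfl fun i _ => hSi k hGg i
    have h4 := hTeq k hGg
    have h5 := hVbd k
    have hc2 : (0:ℝ) ≤ L * D^2 / 2 := by positivity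
    have h6 := mul_le_mul_of_nonneg_left h5 hc2
    have h7 : L * D^2 / 2 * (∫ ω, ∑ i, (gt k ω i)^2 ∂ℙ)
        = L * D^2 / 2 * (∫ ω, ∑ i, (g (X k ω) i)^2 ∂ℙ)
          + L * D^2 / 2 * (∫ ω, ∑ i, (gt k ω i - g (X k ω) i)^2 ∂ℙ) := by
      rw [h4]; ring
    have h8 : D * (∫ ω, ∑ i, g (X k ω) i * gt k ω i ∂ℙ)
        = D * (∫ ω, ∑ i, (g (X k ω) i)^2 ∂ℙ) := by rw [h3]
    linarith
  -- telescoping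
  have htel : ∀ n, ∫ ω, f (X n ω) ∂ℙ
      + (D - L * D^2 / 2) * ∑ k ∈ Finset.range n, ∫ ω, ∑ i, (g (X k ω) i)^2 ∂ℙ
      ≤ f x0 + n * ((L * D^2 / 2) * σ^2) := by
    intro n
    induction n with
    | zero =>
      simp only [hX0, Finset.range_zero, Finset.sum_empty, mul_zero, add_zero,
        Nat.cast_zero, zero_mul]
      rw [integral_const]
      simp
    | succ n ih =>
      have h1 := hstep n
      rw [Finset.sum_range_succ]
      push_cast
      nlinarith [h1, ih]
  -- conclusion
  have hGints : ∀ k ∈ Finset.range K, Integrable (fun ω => ∑ i, (g (X k ω) i)^2) ℙ :=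
    fun k _ => hGgint k (hfint k)
  have hLHS : ∫ ω, (1 / K : ℝ) * ∑ k ∈ Finset.range K, ∑ i, (g (X k ω) i) ^ 2 ∂ℙ
      = (1/(K:ℝ)) * ∑ k ∈ Finset.range K, ∫ ω, ∑ i, (g (X k ω) i)^2 ∂ℙ := by
    rw [integral_const_mul, integral_finset_sum _ hGints]
  rw [hLHS]
  set SG := ∑ k ∈ Finset.range K, ∫ ω, ∑ i, (g (X k ω) i)^2 ∂ℙ with hSG
  have hSGnn : 0 ≤ SG :=
    Finset.sum_nonneg fun k _ => integral_nonneg fun ω => hGgnn k ω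
  have hfK : fstar ≤ ∫ ω, f (X K ω) ∂ℙ := by
    have h1 : ∫ (_ : Ω), fstar ∂ℙ ≤ ∫ ω, f (X K ω) ∂ℙ :=
      integral_mono (integrable_const _) (hfint K) fun ω => hlower _
    rwa [integral_const, probReal_univ, one_smul] at h1
  have hT := htel K
  have hLq : L * q ≠ 0 := by positivity
  have hKne : (K:ℝ) ≠ 0 := ne_of_gt hK0
  have hLD2 : L * D^2 / 2 = 1 / (2 * L * (K:ℝ)) := by
    rw [hD, ← hqq]; field_simp
  have hqK : q ≤ (K:ℝ) := by nlinarith [hq1, hqq, hq0]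
  have hcge : 1 / (2 * (L * q)) ≤ D - L * D^2 / 2 := by
    rw [hLD2, hD]
    have h2 : 1 / (2 * L * (K:ℝ)) ≤ 1 / (2 * (L * q)) := by
      apply one_div_le_one_div_of_le (by positivity)
      nlinarith [hqK, hL]
    have h3 : 1 / (L * q) - 1 / (2 * (L * q)) = 1 / (2 * (L * q)) := by
      field_simp; ring
    linarith
  have hKterm : (K:ℝ) * ((L * D^2 / 2) * σ^2) = σ^2 / (2 * L) := by
    rw [hLD2]; field_simp
  have hB : (1 / (2 * (L * q))) * SG ≤ f x0 - fstar + σ^2 / (2 * L) := by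
    have h1 : (1 / (2 * (L * q))) * SG ≤ (D - L * D^2 / 2) * SG :=
      mul_le_mul_of_nonneg_right hcge hSGnn
    linarith [hT, hfK, hKterm]
  have hmain : SG ≤ 2 * L * q * (f x0 - fstar) + q * σ^2 := by
    have h1 := mul_le_mul_of_nonneg_left hB (show (0:ℝ) ≤ 2 * (L * q) by positivity)
    have h2 : 2 * (L * q) * ((1 / (2 * (L * q))) * SG) = SG := by
      field_simp
    have h3 : 2 * (L * q) * (f x0 - fstar + σ^2 / (2 * L))
        = 2 * L * q * (f x0 - fstar) + q * σ^2 := by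
      field_simp
    linarith
  have h8 : (1/(K:ℝ)) * SG ≤ (1/(K:ℝ)) * (2 * L * q * (f x0 - fstar) + q * σ^2) :=
    mul_le_mul_of_nonneg_left hmain (by positivity)
  have h9 : (1/(K:ℝ)) * (2 * L * q * (f x0 - fstar) + q * σ^2)
      = (1/q) * (2 * L * (f x0 - fstar) + σ^2) := by
    rw [← hqq]; field_simp
  linarith
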